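/- Let X be a random vector in ℝⁿ taking values almost surely in an m-dimensional linear subspace V of ℝⁿ. Then P(X ∈ C_m(X)) = 1. -/

import Mathlib

open MeasureTheory Filter

open MeasureTheory Filter Metric Set
open scoped ENNReal NNReal


lemma core_lemma {m : ℕ} (ρ : Measure (EuclideanSpace ℝ (Fin m))) [IsFiniteMeasure ρ] :
    ρ {z | Filter.liminf (fun ε : ℝ => ρ (Metric.ball z ε) / ENNReal.ofReal (ε ^ m))
      (nhdsWithin 0 (Set.Ioi 0)) = 0} = 0 := by
  set S := {z | Filter.liminf (fun ε : ℝ => ρ (Metric.ball z ε) / ENNReal.ofReal (ε ^ m))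
      (nhdsWithin 0 (Set.Ioi 0)) = 0} with hS
  -- frequently small ratio
  have freq : ∀ z ∈ S, ∀ c : ℝ≥0∞, 0 < c →
      ∃ᶠ ε in nhdsWithin (0:ℝ) (Set.Ioi 0),
        ρ (Metric.ball z ε) / ENNReal.ofReal (ε ^ m) < c := by
    intro z hz c hc
    by_contra h
    rw [Filter.not_frequently] at h
    have : c ≤ Filter.liminf (fun ε : ℝ => ρ (Metric.ball z ε) / ENNReal.ofReal (ε ^ m))
        (nhdsWithin 0 (Set.Ioi 0)) :=
      Filter.le_liminf_of_le (by isBoundedDefault)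
        (h.mono fun ε h => le_of_not_gt h)
    rw [hz] at this
    exact hc.not_ge this
  -- vitali family
  set v := Besicovitch.vitaliFamily ρ with hv
  set κ := volume (Metric.ball (0 : EuclideanSpace ℝ (Fin m)) 1) with hκ
  have hκ0 : κ ≠ 0 := (measure_ball_pos volume _ one_pos).ne'
  have hκt : κ ≠ ⊤ := measure_ball_lt_top.ne
  have key : ∀ (c : ℝ≥0∞), 0 < c → c ≠ ⊤ → ∀ z ∈ S,
      ∃ᶠ a in v.filterAt z, ρ a ≤ (c • volume) a := by
    intro c hc hct z hz
    rw [VitaliFamily.frequently_filterAt_iff]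
    intro δ hδ
    have h2m : ENNReal.ofReal ((2:ℝ) ^ m) ≠ 0 := (ENNReal.ofReal_pos.2 (by positivity)).ne'
    have h2m' : ENNReal.ofReal ((2:ℝ) ^ m) ≠ ⊤ := ENNReal.ofReal_ne_top
    have hc' : 0 < c * κ / ENNReal.ofReal ((2:ℝ) ^ m) :=
      ENNReal.div_pos (mul_ne_zero hc.ne' hκ0) h2m'
    obtain ⟨ε, hεI, hεlt⟩ := Filter.frequently_iff.mp
      (freq z hz _ hc') (Ioo_mem_nhdsGT_of_mem ⟨le_refl (0:ℝ), hδ⟩)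
    obtain ⟨hε0, hεδ⟩ := hεI
    refine ⟨Metric.closedBall z (ε/2), Set.mem_image_of_mem _ (Set.mem_Ioi.2 (by positivity)),
      Metric.closedBall_subset_closedBall (by linarith), ?_⟩
    have hρb : ρ (Metric.ball z ε) < (c * κ / ENNReal.ofReal ((2:ℝ) ^ m)) * ENNReal.ofReal (ε ^ m) := by
      rw [ENNReal.div_lt_iff (Or.inl (by positivity)) (Or.inl ENNReal.ofReal_ne_top)] at hεlt
      exact hεlt
    have hvol : (c • volume) (Metric.closedBall z (ε/2))
        = c * (ENNReal.ofReal ((ε/2) ^ m) * κ) := by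
      rw [Measure.smul_apply, smul_eq_mul,
        Measure.addHaar_closedBall _ _ (by positivity), finrank_euclideanSpace_fin]
    calc ρ (Metric.closedBall z (ε/2))
        ≤ ρ (Metric.ball z ε) := measure_mono (Metric.closedBall_subset_ball (by linarith))
      _ ≤ (c * κ / ENNReal.ofReal ((2:ℝ) ^ m)) * ENNReal.ofReal (ε ^ m) := hρb.le
      _ = (c • volume) (Metric.closedBall z (ε/2)) := by
          rw [hvol]
          have : ENNReal.ofReal (ε ^ m) = ENNReal.ofReal ((2:ℝ)^m) * ENNReal.ofReal ((ε/2) ^ m) := by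
            rw [← ENNReal.ofReal_mul (by positivity)]
            congr 1
            rw [← mul_pow]
            ring_nf
          rw [this, ← mul_assoc, ENNReal.div_mul_cancel h2m h2m']
          ring
  -- conclude on bounded pieces
  have piece : ∀ R : ℕ, ρ (S ∩ Metric.ball 0 R) = 0 := by
    intro R
    refine le_antisymm ?_ zero_le
    refine ENNReal.le_of_forall_pos_le_add (fun ε hε _ => ?_)
    rw [zero_add]
    set d : ℝ≥0∞ := volume (Metric.ball (0 : EuclideanSpace ℝ (Fin m)) R) + 1 with hd
    have hd0 : d ≠ 0 := by simp [hd]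
    have hdt : d ≠ ⊤ := by
      simp only [hd, ENNReal.add_ne_top]
      exact ⟨measure_ball_lt_top.ne, ENNReal.one_ne_top⟩
    set c : ℝ≥0∞ := (ε : ℝ≥0∞) / d with hcdef
    have hc : 0 < c := ENNReal.div_pos (by exact_mod_cast hε.ne') hdt
    have hct : c ≠ ⊤ := by
      refine (ENNReal.div_lt_top ENNReal.coe_ne_top hd0).ne
    haveI : IsLocallyFiniteMeasure (c • (volume : Measure (EuclideanSpace ℝ (Fin m)))) := by
      constructor
      intro x
      refine ⟨Metric.ball x 1, Metric.ball_mem_nhds x one_pos, ?_⟩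
      rw [Measure.smul_apply, smul_eq_mul]
      exact ENNReal.mul_lt_top hct.lt_top measure_ball_lt_top
    have := v.measure_le_of_frequently_le (c • volume) Measure.AbsolutelyContinuous.rfl
      (S ∩ Metric.ball 0 R) (fun z hz => key c hc hct z hz.1)
    calc ρ (S ∩ Metric.ball 0 R) ≤ (c • volume) (S ∩ Metric.ball 0 R) := this
      _ ≤ c * volume (Metric.ball (0 : EuclideanSpace ℝ (Fin m)) R) := by
          rw [Measure.smul_apply, smul_eq_mul]
          exact mul_le_mul_right (measure_mono Set.inter_subset_right) c
      _ ≤ c * d := by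
          exact mul_le_mul_right (by simp [hd, le_add_right]) c
      _ = ε := by rw [hcdef, ENNReal.div_mul_cancel hd0 hdt]
  have hcover : S ⊆ ⋃ R : ℕ, S ∩ Metric.ball 0 R := by
    intro z hz
    obtain ⟨R, hR⟩ := exists_nat_gt ‖z‖
    exact Set.mem_iUnion.2 ⟨R, hz, by simpa [Metric.mem_ball, dist_zero_right] using hR⟩
  refine le_antisymm ?_ zero_le
  calc ρ S ≤ ρ (⋃ R : ℕ, S ∩ Metric.ball 0 R) := measure_mono hcover
    _ ≤ ∑' R : ℕ, ρ (S ∩ Metric.ball 0 R) := measure_iUnion_le _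
    _ = 0 := by simp [piece]


/-- If a random vector `X` in `ℝⁿ` takes values almost surely in an
`m`-dimensional linear subspace `V` of `ℝⁿ`, then `P(X ∈ C_m(X)) = 1`. -/
theorem ae_mem_mould_of_subspace {Ω : Type*} [MeasurableSpace Ω]
    (μ : Measure Ω) [IsProbabilityMeasure μ] {n m : ℕ}
    (X : Ω → EuclideanSpace ℝ (Fin n)) (hX : Measurable X)
    (V : Submodule ℝ (EuclideanSpace ℝ (Fin n))) (hV : Module.finrank ℝ V = m)
    (hXV : ∀ᵐ ω ∂μ, X ω ∈ V) :
    μ {ω | 0 < Filter.liminf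
        (fun ε : ℝ => μ {ω' | ‖X ω' - X ω‖ < ε} / ENNReal.ofReal (ε ^ m))
        (nhdsWithin 0 (Set.Ioi 0))} = 1 := by
  classical
  set ν : Measure (EuclideanSpace ℝ (Fin n)) := Measure.map X μ with hνdef
  haveI : IsProbabilityMeasure ν := Measure.isProbabilityMeasure_map hX.aemeasurable
  -- the isometry from V to ℝ^m
  haveI : FiniteDimensional ℝ V := inferInstance
  let e : V ≃ₗᵢ[ℝ] EuclideanSpace ℝ (Fin m) :=
    ((stdOrthonormalBasis ℝ V).reindex (finCongr hV)).repr
  let ψ : EuclideanSpace ℝ (Fin n) → EuclideanSpace ℝ (Fin m) := fun x => e ((Submodule.orthogonalProjection V) x)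
  have hψc : Continuous ψ := e.continuous.comp (Submodule.orthogonalProjection V).continuous
  have hψm : Measurable ψ := hψc.measurable
  have hψ : ∀ x ∈ V, ∀ y ∈ V, ‖ψ y - ψ x‖ = ‖y - x‖ := by
    intro x hx y hy
    have hpx : (((Submodule.orthogonalProjection V) x : V) : EuclideanSpace ℝ (Fin n)) = x :=
      Submodule.starProjection_eq_self_iff.2 hx
    have hpy : (((Submodule.orthogonalProjection V) y : V) : EuclideanSpace ℝ (Fin n)) = y :=
      Submodule.starProjection_eq_self_iff.2 hy
    have h1 : ψ y - ψ x = e ((Submodule.orthogonalProjection V) y - (Submodule.orthogonalProjection V) x) :=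
      (map_sub e _ _).symm
    rw [h1, e.norm_map]
    rw [show ‖(Submodule.orthogonalProjection V) y - (Submodule.orthogonalProjection V) x‖
        = ‖(((Submodule.orthogonalProjection V) y - (Submodule.orthogonalProjection V) x : V) :
            EuclideanSpace ℝ (Fin n))‖ from rfl]
    push_cast
    rw [hpx, hpy]
  have hVmeas : MeasurableSet (V : Set (EuclideanSpace ℝ (Fin n))) :=
    (Submodule.closed_of_finiteDimensional V).measurableSet
  have hνV : ν ((V : Set (EuclideanSpace ℝ (Fin n)))ᶜ) = 0 := by
    rw [hνdef, Measure.map_apply hX hVmeas.compl]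
    rw [ae_iff] at hXV
    exact hXV
  have hinter : ∀ A : Set (EuclideanSpace ℝ (Fin n)), ν A = ν (A ∩ V) := by
    intro A
    refine le_antisymm ?_ (measure_mono Set.inter_subset_left)
    calc ν A ≤ ν ((A ∩ V) ∪ (V : Set (EuclideanSpace ℝ (Fin n)))ᶜ) := by
          apply measure_mono
          intro x hx
          by_cases h : x ∈ V
          · exact Or.inl ⟨hx, h⟩
          · exact Or.inr h
      _ ≤ ν (A ∩ V) + ν ((V : Set (EuclideanSpace ℝ (Fin n)))ᶜ) := measure_union_le _ _
      _ = ν (A ∩ V) := by rw [hνV, add_zero]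
  set ρ : Measure (EuclideanSpace ℝ (Fin m)) := Measure.map ψ ν with hρdef
  haveI : IsProbabilityMeasure ρ := Measure.isProbabilityMeasure_map hψm.aemeasurable
  have hball : ∀ x, x ∈ V → ∀ ε : ℝ, ν (Metric.ball x ε) = ρ (Metric.ball (ψ x) ε) := by
    intro x hx ε
    rw [hρdef, Measure.map_apply hψm measurableSet_ball]
    rw [hinter (Metric.ball x ε), hinter (ψ ⁻¹' Metric.ball (ψ x) ε)]
    congr 1
    ext y
    simp only [Set.mem_inter_iff, Set.mem_preimage, Metric.mem_ball, SetLike.mem_coe,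
      and_congr_left_iff]
    intro hy
    rw [dist_eq_norm, dist_eq_norm, hψ x hx y hy]
  -- bad set
  set Sbad : Set (EuclideanSpace ℝ (Fin m)) :=
    {z | Filter.liminf (fun ε : ℝ => ρ (Metric.ball z ε) / ENNReal.ofReal (ε ^ m))
      (nhdsWithin 0 (Set.Ioi 0)) = 0} with hSbad
  have hρS : ρ Sbad = 0 := core_lemma ρ
  set N : Set (EuclideanSpace ℝ (Fin m)) := toMeasurable ρ Sbad with hN
  have hρN : ρ N = 0 := by rw [hN, measure_toMeasurable]; exact hρS
  have hbad : μ {ω | ψ (X ω) ∈ N} = 0 := by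
    have hNm : MeasurableSet N := measurableSet_toMeasurable ρ Sbad
    have h2 : μ {ω | ψ (X ω) ∈ N} = ρ N := by
      rw [hρdef, Measure.map_apply hψm hNm, hνdef, Measure.map_apply hX (hψm hNm)]
      rfl
    rw [h2]
    exact hρN
  have hbad' : ∀ᵐ ω ∂μ, ψ (X ω) ∉ N := by
    rw [ae_iff]
    simpa using hbad
  have hae : ∀ᵐ ω ∂μ, 0 < Filter.liminf
      (fun ε : ℝ => μ {ω' | ‖X ω' - X ω‖ < ε} / ENNReal.ofReal (ε ^ m))
      (nhdsWithin 0 (Set.Ioi 0)) := by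
    filter_upwards [hXV, hbad'] with ω hωV hωN
    have heq : (fun ε : ℝ => μ {ω' | ‖X ω' - X ω‖ < ε} / ENNReal.ofReal (ε ^ m))
        = fun ε : ℝ => ρ (Metric.ball (ψ (X ω)) ε) / ENNReal.ofReal (ε ^ m) := by
      funext ε
      congr 1
      rw [← hball _ hωV ε, hνdef, Measure.map_apply hX measurableSet_ball]
      congr 1
    rw [heq]
    rw [pos_iff_ne_zero]
    intro h0
    exact hωN (subset_toMeasurable ρ Sbad h0)
  set G := {ω | 0 < Filter.liminf
      (fun ε : ℝ => μ {ω' | ‖X ω' - X ω‖ < ε} / ENNReal.ofReal (ε ^ m))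
      (nhdsWithin 0 (Set.Ioi 0))} with hG
  have h0 : μ Gᶜ = 0 := by
    rw [ae_iff] at hae
    convert hae using 2
    rfl
  refine le_antisymm prob_le_one ?_
  calc (1 : ℝ≥0∞) = μ Set.univ := measure_univ.symm
    _ = μ (G ∪ Gᶜ) := by rw [Set.union_compl_self]
    _ ≤ μ G + μ Gᶜ := measure_union_le _ _
    _ = μ G := by rw [h0, add_zero]
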